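/- Under the same hypotheses (M Hermitian positive definite, H_T, H_P invertible with ‖H_T⁻¹M‖_M ≤ C_T, ‖H_P⁻¹M‖_M ≤ C_P, M_1 = i((γ-1)/γ)M, M_2 = γ(1-Λ/𝓜)M), every generalized eigenvalue λ of A = [[H_T,M_1],[M_2,H_P]] with respect to the block lower-triangular preconditioner Π_GS = [[H_T,0],[M_2,H_P]] satisfies |λ - 1| ≤ C_T C_P (γ-1)(1 - Λ/𝓜), and λ = 1 occurs with eigenspace of dimension at least n. -/

import Mathlib

open Matrix
open scoped ComplexOrder

/-- The vector norm induced by a Hermitian positive definite matrix `M`: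
`‖u‖_M = (u* M u)^{1/2}`. -/
noncomputable def vecNormM {n : ℕ} (M : Matrix (Fin n) (Fin n) ℂ) (u : Fin n → ℂ) : ℝ :=
  Real.sqrt (star u ⬝ᵥ M.mulVec u).re

/-- The matrix operator norm induced by the vector norm `‖·‖_M`. -/
noncomputable def opNormM {n : ℕ} (M A : Matrix (Fin n) (Fin n) ℂ) : ℝ :=
  sSup {r : ℝ | ∃ u : Fin n → ℂ, vecNormM M u = 1 ∧ r = vecNormM M (A.mulVec u)}


lemma vecNormM_nonneg {n : ℕ} (M : Matrix (Fin n) (Fin n) ℂ) (u : Fin n → ℂ) :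
    0 ≤ vecNormM M u := Real.sqrt_nonneg _

lemma vecNormM_zero {n : ℕ} (M : Matrix (Fin n) (Fin n) ℂ) :
    vecNormM M 0 = 0 := by
  simp [vecNormM]

lemma vecNormM_smul {n : ℕ} (M : Matrix (Fin n) (Fin n) ℂ)
    (c : ℂ) (u : Fin n → ℂ) : vecNormM M (c • u) = ‖c‖ * vecNormM M u := by
  unfold vecNormM
  have h1 : star (c • u) ⬝ᵥ M.mulVec (c • u)
      = ((Complex.normSq c : ℝ) : ℂ) * (star u ⬝ᵥ M.mulVec u) := by
    rw [star_smul, Matrix.mulVec_smul, smul_dotProduct, dotProduct_smul]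
    rw [smul_eq_mul, smul_eq_mul, ← mul_assoc]
    congr 1
    rw [show (star c : ℂ) = (starRingEnd ℂ) c from rfl, ← Complex.normSq_eq_conj_mul_self]
  rw [h1, Complex.re_ofReal_mul, Real.sqrt_mul (Complex.normSq_nonneg c), Complex.norm_def]

lemma vecNormM_pos {n : ℕ} {M : Matrix (Fin n) (Fin n) ℂ} (hM : M.PosDef)
    {u : Fin n → ℂ} (hu : u ≠ 0) : 0 < vecNormM M u :=
  Real.sqrt_pos.mpr (hM.re_dotProduct_pos hu)

lemma vecNormM_continuous {n : ℕ} (M : Matrix (Fin n) (Fin n) ℂ) :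
    Continuous fun u : Fin n → ℂ => vecNormM M u := by
  apply Real.continuous_sqrt.comp
  apply Complex.continuous_re.comp
  have : (fun u : Fin n → ℂ => star u ⬝ᵥ M.mulVec u)
      = fun u : Fin n → ℂ => ∑ i, (starRingEnd ℂ) (u i) * ∑ j, M i j * u j := by
    funext u; rfl
  rw [this]
  exact continuous_finset_sum _ fun i _ =>
    (Complex.continuous_conj.comp (continuous_apply i)).mul
      (continuous_finset_sum _ fun j _ => continuous_const.mul (continuous_apply j))

lemma setM_bddAbove {n : ℕ} {M : Matrix (Fin n) (Fin n) ℂ} (hM : M.PosDef)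
    (B : Matrix (Fin n) (Fin n) ℂ) :
    BddAbove {r : ℝ | ∃ u : Fin n → ℂ, vecNormM M u = 1 ∧ r = vecNormM M (B.mulVec u)} := by
  rcases Nat.eq_zero_or_pos n with hn | hn
  · subst hn
    refine (congrArg BddAbove (?_ : _ = (∅ : Set ℝ))).mpr bddAbove_empty
    rw [Set.eq_empty_iff_forall_notMem]
    rintro r ⟨u, hu, -⟩
    have : u = 0 := Subsingleton.elim _ _
    rw [this, vecNormM_zero] at hu
    norm_num at hu
  · haveI : Nonempty (Fin n) := ⟨⟨0, hn⟩⟩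
    have hsne : (Metric.sphere (0 : Fin n → ℂ) 1).Nonempty :=
      NormedSpace.sphere_nonempty.mpr zero_le_one
    have hcont : ContinuousOn (fun u : Fin n → ℂ => vecNormM M u)
        (Metric.sphere (0 : Fin n → ℂ) 1) := (vecNormM_continuous M).continuousOn
    obtain ⟨umin, hminmem, hmin⟩ :=
      (isCompact_sphere (0 : Fin n → ℂ) 1).exists_isMinOn hsne hcont
    obtain ⟨umax, hmaxmem, hmax⟩ :=
      (isCompact_sphere (0 : Fin n → ℂ) 1).exists_isMaxOn hsne hcont
    set a := vecNormM M umin with ha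
    set b := vecNormM M umax with hb
    have humin : umin ≠ 0 := by
      intro h
      rw [mem_sphere_zero_iff_norm, h, norm_zero] at hminmem; norm_num at hminmem
    have hapos : 0 < a := vecNormM_pos hM humin
    have hbnn : 0 ≤ b := vecNormM_nonneg M _
    -- two-sided comparison with the standard norm
    have hcomp : ∀ u : Fin n → ℂ, a * ‖u‖ ≤ vecNormM M u ∧ vecNormM M u ≤ b * ‖u‖ := by
      intro u
      rcases eq_or_ne u 0 with rfl | hu
      · simp [vecNormM_zero]
      · have hnu : (0:ℝ) < ‖u‖ := norm_pos_iff.mpr hu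
        set c : ℂ := ((‖u‖ : ℝ) : ℂ)⁻¹ with hc
        have hcne : ((‖u‖ : ℝ) : ℂ) ≠ 0 := by
          simpa using ne_of_gt hnu
        have hvmem : c • u ∈ Metric.sphere (0 : Fin n → ℂ) 1 := by
          rw [mem_sphere_zero_iff_norm, norm_smul, hc, norm_inv, Complex.norm_real,
            Real.norm_eq_abs, abs_of_pos hnu, inv_mul_cancel₀ (ne_of_gt hnu)]
        have hdecomp : vecNormM M u = ‖u‖ * vecNormM M (c • u) := by
          rw [vecNormM_smul, hc, norm_inv, Complex.norm_real, Real.norm_eq_abs, abs_of_pos hnu]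
          field_simp
        constructor
        · rw [hdecomp, mul_comm a ‖u‖]
          exact mul_le_mul_of_nonneg_left (hmin hvmem) (le_of_lt hnu)
        · rw [hdecomp, mul_comm b ‖u‖]
          exact mul_le_mul_of_nonneg_left (hmax hvmem) (le_of_lt hnu)
    -- standard operator bound for B
    let L := LinearMap.toContinuousLinearMap (B.mulVecLin)
    refine ⟨b * ‖L‖ * a⁻¹, ?_⟩
    rintro r ⟨u, hu, rfl⟩
    have hule : ‖u‖ ≤ a⁻¹ := by
      have h1 := (hcomp u).1
      rw [hu] at h1
      rw [← one_div, le_div_iff₀ hapos]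
      linarith
    have h2 : vecNormM M (B.mulVec u) ≤ b * ‖B.mulVec u‖ := (hcomp _).2
    have h3 : ‖B.mulVec u‖ ≤ ‖L‖ * ‖u‖ := L.le_opNorm u
    calc vecNormM M (B.mulVec u) ≤ b * (‖L‖ * ‖u‖) :=
          le_trans h2 (mul_le_mul_of_nonneg_left h3 hbnn)
      _ ≤ b * (‖L‖ * a⁻¹) := by
          exact mul_le_mul_of_nonneg_left
            (mul_le_mul_of_nonneg_left hule (norm_nonneg L)) hbnn
      _ = b * ‖L‖ * a⁻¹ := by ring

lemma mulVec_vecNormM_le {n : ℕ} {M : Matrix (Fin n) (Fin n) ℂ} (hM : M.PosDef)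
    (B : Matrix (Fin n) (Fin n) ℂ) (u : Fin n → ℂ) :
    vecNormM M (B.mulVec u) ≤ opNormM M B * vecNormM M u := by
  rcases eq_or_ne u 0 with rfl | hu
  · simp [Matrix.mulVec_zero, vecNormM_zero]
  · have hpos : 0 < vecNormM M u := vecNormM_pos hM hu
    set c : ℂ := ((vecNormM M u : ℝ) : ℂ)⁻¹ with hc
    have hcabs : ‖c‖ = (vecNormM M u)⁻¹ := by
      rw [hc, norm_inv, Complex.norm_real, Real.norm_eq_abs, abs_of_pos hpos]
    have hunit : vecNormM M (c • u) = 1 := by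
      rw [vecNormM_smul, hcabs, inv_mul_cancel₀ (ne_of_gt hpos)]
    have hle : vecNormM M (B.mulVec (c • u)) ≤ opNormM M B :=
      le_csSup (setM_bddAbove hM B) ⟨c • u, hunit, rfl⟩
    rw [Matrix.mulVec_smul, vecNormM_smul, hcabs] at hle
    calc vecNormM M (B.mulVec u)
        = vecNormM M u * ((vecNormM M u)⁻¹ * vecNormM M (B.mulVec u)) := by
          field_simp
      _ ≤ vecNormM M u * opNormM M B := mul_le_mul_of_nonneg_left hle (le_of_lt hpos)
      _ = opNormM M B * vecNormM M u := mul_comm _ _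

lemma opNormM_nonneg {n : ℕ} {M : Matrix (Fin n) (Fin n) ℂ} (hM : M.PosDef)
    (B : Matrix (Fin n) (Fin n) ℂ) {u0 : Fin n → ℂ} (h0 : u0 ≠ 0) :
    0 ≤ opNormM M B := by
  have hpos : 0 < vecNormM M u0 := vecNormM_pos hM h0
  set c : ℂ := ((vecNormM M u0 : ℝ) : ℂ)⁻¹ with hc
  have hunit : vecNormM M (c • u0) = 1 := by
    rw [vecNormM_smul, hc, norm_inv, Complex.norm_real, Real.norm_eq_abs, abs_of_pos hpos,
      inv_mul_cancel₀ (ne_of_gt hpos)]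
  exact le_trans (vecNormM_nonneg M _)
    (le_csSup (setM_bddAbove hM B) ⟨c • u0, hunit, rfl⟩)


/-- every generalized eigenvalue `λ` of `A = [[H_T,M₁],[M₂,H_P]]`
with respect to the block lower-triangular preconditioner `Π_GS = [[H_T,0],[M₂,H_P]]`
satisfies `|λ-1| ≤ C_T C_P (γ-1)(1-Λ/𝓜)`, and `λ = 1` occurs with eigenspace of
dimension at least `n`. -/
theorem stmt7 {n : ℕ} (M HT HP : Matrix (Fin n) (Fin n) ℂ) (hM : M.PosDef)
    (hHT : IsUnit HT) (hHP : IsUnit HP)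
    (CT CP γ Λ 𝓜 : ℝ) (hγ : 1 < γ) (hΛ : 0 < Λ) (hΛ𝓜 : Λ < 𝓜)
    (hCT : opNormM M (HT⁻¹ * M) ≤ CT) (hCP : opNormM M (HP⁻¹ * M) ≤ CP) :
    (∀ lam : ℂ, (∃ x : (Fin n ⊕ Fin n) → ℂ, x ≠ 0 ∧
      (Matrix.fromBlocks HT ((Complex.I * (((γ : ℂ) - 1) / (γ : ℂ))) • M)
          (((γ * (1 - Λ / 𝓜) : ℝ) : ℂ) • M) HP).mulVec x =
        lam • (Matrix.fromBlocks HT 0 (((γ * (1 - Λ / 𝓜) : ℝ) : ℂ) • M) HP).mulVec x) →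
      ‖lam - 1‖ ≤ CT * CP * (γ - 1) * (1 - Λ / 𝓜)) ∧
    (∃ S : Submodule ℂ ((Fin n ⊕ Fin n) → ℂ), n ≤ Module.finrank ℂ S ∧
      ∀ x ∈ S,
        (Matrix.fromBlocks HT ((Complex.I * (((γ : ℂ) - 1) / (γ : ℂ))) • M)
            (((γ * (1 - Λ / 𝓜) : ℝ) : ℂ) • M) HP).mulVec x =
          (1 : ℂ) • (Matrix.fromBlocks HT 0 (((γ * (1 - Λ / 𝓜) : ℝ) : ℂ) • M) HP).mulVec x) := by
  have hγ0 : (0:ℝ) < γ := by linarith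
  have h𝓜0 : (0:ℝ) < 𝓜 := by linarith
  have hfrac : (0:ℝ) < 1 - Λ / 𝓜 := by
    have : Λ / 𝓜 < 1 := (div_lt_one h𝓜0).mpr hΛ𝓜
    linarith
  set m₁ : ℂ := Complex.I * (((γ : ℂ) - 1) / (γ : ℂ)) with hm₁
  set m₂ : ℂ := ((γ * (1 - Λ / 𝓜) : ℝ) : ℂ) with hm₂
  have habs1 : ‖m₁‖ = (γ - 1) / γ := by
    rw [hm₁, norm_mul, Complex.norm_I, one_mul, norm_div]
    rw [show ((γ:ℂ) - 1) = (((γ - 1 : ℝ)) : ℂ) by push_cast; ring]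
    rw [Complex.norm_real, Complex.norm_real, Real.norm_eq_abs, Real.norm_eq_abs, abs_of_pos (by linarith), abs_of_pos hγ0]
  have habs2 : ‖m₂‖ = γ * (1 - Λ / 𝓜) := by
    rw [hm₂, Complex.norm_real, Real.norm_eq_abs, abs_of_pos (mul_pos hγ0 hfrac)]
  have hHTd := Matrix.nonsing_inv_mul HT ((Matrix.isUnit_iff_isUnit_det HT).mp hHT)
  have hHPd := Matrix.nonsing_inv_mul HP ((Matrix.isUnit_iff_isUnit_det HP).mp hHP)
  constructor
  · rintro lam ⟨x, hxne, h⟩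
    set x1 : Fin n → ℂ := x ∘ Sum.inl with hx1
    set x2 : Fin n → ℂ := x ∘ Sum.inr with hx2
    rw [Matrix.fromBlocks_mulVec, Matrix.fromBlocks_mulVec] at h
    have e1 : HT.mulVec x1 + (m₁ • M).mulVec x2
        = lam • (HT.mulVec x1 + (0 : Matrix (Fin n) (Fin n) ℂ).mulVec x2) :=
      funext fun j => congrFun h (Sum.inl j)
    have e2 : (m₂ • M).mulVec x1 + HP.mulVec x2
        = lam • ((m₂ • M).mulVec x1 + HP.mulVec x2) :=
      funext fun j => congrFun h (Sum.inr j)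
    rw [Matrix.zero_mulVec, add_zero] at e1
    -- a nonzero vector in Fin n → ℂ (established below in the lam ≠ 1 case; but we
    -- need CT, CP ≥ 0 in both cases)
    obtain ⟨i0, hi0⟩ : ∃ i, x i ≠ 0 := Function.ne_iff.mp hxne
    rcases eq_or_ne lam 1 with rfl | hlam
    · -- trivial case
      have hCT0 : 0 ≤ CT := by
        rcases i0 with j | j
        · have : x1 ≠ 0 := fun h0 => hi0 (congrFun h0 j)
          exact le_trans (opNormM_nonneg hM (HT⁻¹ * M) this) hCT
        · have : x2 ≠ 0 := fun h0 => hi0 (congrFun h0 j)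
          exact le_trans (opNormM_nonneg hM (HT⁻¹ * M) this) hCT
      have hCP0 : 0 ≤ CP := by
        rcases i0 with j | j
        · have : x1 ≠ 0 := fun h0 => hi0 (congrFun h0 j)
          exact le_trans (opNormM_nonneg hM (HP⁻¹ * M) this) hCP
        · have : x2 ≠ 0 := fun h0 => hi0 (congrFun h0 j)
          exact le_trans (opNormM_nonneg hM (HP⁻¹ * M) this) hCP
      simp only [sub_self, norm_zero]
      have : 0 ≤ CT * CP := mul_nonneg hCT0 hCP0
      have h2 : 0 ≤ CT * CP * (γ - 1) := mul_nonneg this (by linarith)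
      exact mul_nonneg h2 (le_of_lt hfrac)
    · -- main case
      have hw : (m₂ • M).mulVec x1 + HP.mulVec x2 = 0 := by
        have h0 : (lam - 1) • ((m₂ • M).mulVec x1 + HP.mulVec x2) = 0 := by
          rw [sub_smul, one_smul, ← e2, sub_self]
        rcases smul_eq_zero.mp h0 with h' | h'
        · exact absurd (sub_eq_zero.mp h') hlam
        · exact h'
      have hx2eq : x2 = -(m₂ • ((HP⁻¹ * M).mulVec x1)) := by
        have h1 : HP.mulVec x2 = -((m₂ • M).mulVec x1) :=
          eq_neg_of_add_eq_zero_right hw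
        have h2 := congrArg (fun v => HP⁻¹.mulVec v) h1
        simpa [Matrix.mulVec_mulVec, hHPd, Matrix.one_mulVec, Matrix.mulVec_neg,
          Matrix.smul_mulVec, Matrix.mulVec_smul] using h2
      have hx1ne : x1 ≠ 0 := by
        intro h0
        apply hxne
        have hx2z : x2 = 0 := by rw [hx2eq, h0, Matrix.mulVec_zero, smul_zero, neg_zero]
        funext i
        cases i with
        | inl j => exact congrFun h0 j
        | inr j => exact congrFun hx2z j
      have hCT0 : 0 ≤ CT := le_trans (opNormM_nonneg hM (HT⁻¹ * M) hx1ne) hCT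
      have hCP0 : 0 ≤ CP := le_trans (opNormM_nonneg hM (HP⁻¹ * M) hx1ne) hCP
      -- (lam - 1) • x1 = (-(m₁ * m₂)) • ((HT⁻¹ * M) *ᵥ ((HP⁻¹ * M) *ᵥ x1))
      have e1' : (lam - 1) • (HT.mulVec x1) = m₁ • (M.mulVec x2) := by
        rw [sub_smul, one_smul, ← e1, Matrix.smul_mulVec]
        abel
      have e3 : (lam - 1) • x1 = m₁ • ((HT⁻¹ * M).mulVec x2) := by
        have h4 := congrArg (fun v => HT⁻¹.mulVec v) e1'
        simpa [Matrix.mulVec_mulVec, hHTd, Matrix.one_mulVec, Matrix.mulVec_smul] using h4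
      rw [hx2eq] at e3
      have e4 : (lam - 1) • x1
          = (-(m₁ * m₂)) • ((HT⁻¹ * M).mulVec ((HP⁻¹ * M).mulVec x1)) := by
        rw [e3, Matrix.mulVec_neg, Matrix.mulVec_smul, smul_neg, smul_smul, neg_smul]
      -- norms
      have hN1 : vecNormM M ((lam - 1) • x1) = ‖lam - 1‖ * vecNormM M x1 :=
        vecNormM_smul M _ _
      have hN2 : vecNormM M ((-(m₁ * m₂)) • ((HT⁻¹ * M).mulVec ((HP⁻¹ * M).mulVec x1)))
          ≤ (‖m₁‖ * ‖m₂‖) * (CT * (CP * vecNormM M x1)) := by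
        rw [vecNormM_smul, norm_neg, norm_mul]
        refine mul_le_mul_of_nonneg_left ?_ (by positivity)
        calc vecNormM M ((HT⁻¹ * M).mulVec ((HP⁻¹ * M).mulVec x1))
            ≤ opNormM M (HT⁻¹ * M) * vecNormM M ((HP⁻¹ * M).mulVec x1) :=
              mulVec_vecNormM_le hM _ _
          _ ≤ CT * vecNormM M ((HP⁻¹ * M).mulVec x1) :=
              mul_le_mul_of_nonneg_right hCT (vecNormM_nonneg M _)
          _ ≤ CT * (opNormM M (HP⁻¹ * M) * vecNormM M x1) :=
              mul_le_mul_of_nonneg_left (mulVec_vecNormM_le hM _ _) hCT0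
          _ ≤ CT * (CP * vecNormM M x1) :=
              mul_le_mul_of_nonneg_left
                (mul_le_mul_of_nonneg_right hCP (vecNormM_nonneg M _)) hCT0
      have key : ‖lam - 1‖ * vecNormM M x1
          ≤ (‖m₁‖ * ‖m₂‖ * (CT * CP)) * vecNormM M x1 := by
        rw [← hN1]
        calc vecNormM M ((lam - 1) • x1)
            ≤ (‖m₁‖ * ‖m₂‖) * (CT * (CP * vecNormM M x1)) := by
              rw [e4]; exact hN2
          _ = (‖m₁‖ * ‖m₂‖ * (CT * CP)) * vecNormM M x1 := by ring
      have hxpos : 0 < vecNormM M x1 := vecNormM_pos hM hx1ne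
      have hfin : ‖lam - 1‖
          ≤ ‖m₁‖ * ‖m₂‖ * (CT * CP) :=
        le_of_mul_le_mul_right key hxpos
      calc ‖lam - 1‖ ≤ ‖m₁‖ * ‖m₂‖ * (CT * CP) := hfin
        _ = CT * CP * (γ - 1) * (1 - Λ / 𝓜) := by
            rw [habs1, habs2]
            field_simp
  · -- eigenspace of lam = 1
    refine ⟨LinearMap.ker (LinearMap.funLeft ℂ ℂ (Sum.inr : Fin n → Fin n ⊕ Fin n)), ?_, ?_⟩
    · have hsurj : Function.Surjective
          (LinearMap.funLeft ℂ ℂ (Sum.inr : Fin n → Fin n ⊕ Fin n)) :=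
        LinearMap.funLeft_surjective_of_injective ℂ ℂ _ Sum.inr_injective
      have hrank := LinearMap.finrank_range_add_finrank_ker
        (LinearMap.funLeft ℂ ℂ (Sum.inr : Fin n → Fin n ⊕ Fin n))
      rw [LinearMap.range_eq_top.mpr hsurj] at hrank
      have h1 : Module.finrank ℂ ((Fin n ⊕ Fin n) → ℂ) = n + n := by
        rw [Module.finrank_pi]
        simp
      have h2 : Module.finrank ℂ (⊤ : Submodule ℂ (Fin n → ℂ)) = n := by
        rw [finrank_top, Module.finrank_pi]
        simp
      omega
    · intro x hx
      have hx2 : x ∘ Sum.inr = 0 := hx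
      rw [one_smul, Matrix.fromBlocks_mulVec, Matrix.fromBlocks_mulVec, hx2]
      simp [Matrix.mulVec_zero]
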